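/- No finite simple group is (∗)-coverable. That is, if G is a finite simple group, then there do not exist proper subgroups H, K of G with G = K ∪ ⋃_{g∈G} H^g. -/
import Mathlib

open MulAction in
/-- Jordan's lemma: a finite group is not the union of conjugates of a proper subgroup. -/
lemma jordan_aux {G : Type*} [Group G] [Finite G] (H : Subgroup G) (hH : H ≠ ⊤) :
    ∃ x : G, ∀ g : G, g * x * g⁻¹ ∉ H := by
  classical
  by_contra hc
  push_neg at hc
  haveI : Fintype G := Fintype.ofFinite G
  haveI : Fintype (G ⧸ H) := Fintype.ofFinite _
  haveI : Fintype (orbitRel.Quotient G (G ⧸ H)) := Fintype.ofFinite _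
  haveI hsub : Subsingleton (orbitRel.Quotient G (G ⧸ H)) :=
    (pretransitive_iff_subsingleton_quotient G (G ⧸ H)).1 inferInstance
  have hΩ : Fintype.card (orbitRel.Quotient G (G ⧸ H)) = 1 := by
    refine le_antisymm (Fintype.card_le_one_iff_subsingleton.2 hsub) ?_
    exact Fintype.card_pos
  have hsum := sum_card_fixedBy_eq_card_orbits_mul_card_group G (G ⧸ H)
  rw [hΩ, one_mul] at hsum
  -- every element has at least one fixed point
  have h1 : ∀ a : G, 1 ≤ Fintype.card (fixedBy (G ⧸ H) a) := by
    intro a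
    obtain ⟨g, hg⟩ := hc a
    refine Fintype.card_pos_iff.2 ⟨⟨(g⁻¹ : G), ?_⟩⟩
    show a • ((g⁻¹ : G) : G ⧸ H) = ((g⁻¹ : G) : G ⧸ H)
    rw [MulAction.Quotient.smul_mk, QuotientGroup.eq]
    have := H.inv_mem hg
    simpa [mul_assoc] using this
  -- the identity fixes more than one point
  have h2 : 1 < Fintype.card (fixedBy (G ⧸ H) (1 : G)) := by
    have hfix : (fixedBy (G ⧸ H) (1 : G)) = Set.univ := by
      ext q; simp [MulAction.mem_fixedBy]
    have hcard : Fintype.card (fixedBy (G ⧸ H) (1 : G)) = Fintype.card (G ⧸ H) := by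
      simp only [hfix]
      exact Fintype.card_congr (Equiv.Set.univ _)
    rw [hcard]
    have := Subgroup.one_lt_index_of_ne_top (H := H) hH
    rwa [Subgroup.index_eq_card, Nat.card_eq_fintype_card] at this
  have hlt : Fintype.card G < ∑ a : G, Fintype.card (fixedBy (G ⧸ H) a) := by
    calc Fintype.card G = ∑ _a : G, 1 := by simp
    _ < ∑ a : G, Fintype.card (fixedBy (G ⧸ H) a) :=
        Finset.sum_lt_sum (fun i _ => h1 i) ⟨1, Finset.mem_univ _, h2⟩
  omega

/-- No finite simple group is (∗)-coverable: there are no proper subgroups `H`, `K`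
with `G = K ∪ ⋃_{g∈G} H^g`. -/
theorem stmt_3 {G : Type*} [Group G] [Finite G] [IsSimpleGroup G] :
    ¬ ∃ H K : Subgroup G, H ≠ ⊤ ∧ K ≠ ⊤ ∧
      ∀ x : G, x ∈ K ∨ ∃ g : G, g * x * g⁻¹ ∈ H := by
  rintro ⟨H, K, hH, hK, hcov⟩
  -- D: elements with no conjugate in H
  set D : Set G := {x | ∀ g : G, g * x * g⁻¹ ∉ H} with hD
  -- D is closed under conjugation
  have hDconj : ∀ x ∈ D, ∀ c : G, c * x * c⁻¹ ∈ D := by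
    intro x hx c g
    have := hx (g * c)
    simpa [mul_assoc] using this
  -- D ⊆ K
  have hDK : D ⊆ (K : Set G) := by
    intro x hx
    rcases hcov x with h | ⟨g, hg⟩
    · exact h
    · exact absurd hg (hx g)
  -- the normal closure of D is contained in K
  have hNK : Subgroup.normalClosure D ≤ K := by
    rw [Subgroup.normalClosure, Subgroup.closure_le]
    intro a ha
    rw [Group.mem_conjugatesOfSet_iff] at ha
    obtain ⟨b, hb, hconj⟩ := ha
    rw [isConj_iff] at hconj
    obtain ⟨c, hc⟩ := hconj
    rw [← hc]
    exact hDK (hDconj b hb c)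
  -- normal closure is normal; simplicity: it's ⊥ or ⊤
  rcases Subgroup.Normal.eq_bot_or_eq_top (Subgroup.normalClosure_normal (s := D)) with hbot | htop
  · -- then D ⊆ {1}, but 1 ∉ D, so D = ∅, contradicting Jordan
    obtain ⟨x, hx⟩ := jordan_aux H hH
    have hxD : x ∈ D := hx
    have : x ∈ Subgroup.normalClosure D := Subgroup.subset_normalClosure hxD
    rw [hbot, Subgroup.mem_bot] at this
    subst this
    exact hx 1 (by simpa using H.one_mem)
  · exact hK (top_le_iff.1 (htop ▸ hNK))
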